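/- (Lyapunov drift for exponential ergodicity) Suppose $\rho:=\rho(1,\dots,1)<0$ is the maximal eigenvalue of the matrix $B(1,\dots,1)=(B_{kl}(1,\dots,1))$ with positive left-eigen structure, i.e. there is a vector $(x_1,\dots,x_n)>0$ with $\sum_{l=1}^n B_{kl}(1,\dots,1)x_l = \rho\, x_k$ for each $k$, and suppose $\sum_{j=1}^n [A_j(1,\dots,1)+H_j(1,\dots,1)]<\infty$. Define $f_{\mathbf{i}}=\sum_{k=1}^n i_k x_k$, $C_2=-\rho>0$, and $C_1=\big(\sum_j A_j(1,\dots,1)\vee \sum_j H_j(1,\dots,1)\big)\max_k x_k$. Then for every $\mathbf{i}\in\mathbb{Z}_+^n$: $\sum_{\mathbf{j}\in\mathbb{Z}_+^n} q_{\mathbf{ij}}(f_{\mathbf{j}}-f_{\mathbf{i}}) \le C_1 - C_2 f_{\mathbf{i}}$. -/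

import Mathlib

open Filter Topology Set MeasureTheory

noncomputable def gen {n : ℕ} (a : (Fin n → ℕ) → ℝ) (u : Fin n → ℝ) : ℝ :=
  ∑' j : Fin n → ℕ, a j * ∏ l, u l ^ j l

def unitvec {n : ℕ} (k : Fin n) : Fin n → ℕ := fun l => if l = k then 1 else 0

noncomputable def qmat {n : ℕ} (h a : (Fin n → ℕ) → ℝ) (b : Fin n → (Fin n → ℕ) → ℝ)
    (i j : Fin n → ℕ) : ℝ :=
  if i = 0 then h j
  else (∑ k : Fin n, if ∀ l, i l ≤ j l + unitvec k l then
          (i k : ℝ) * b k (fun l => j l + unitvec k l - i l) else 0)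
      + (if ∀ l, i l ≤ j l then a (fun l => j l - i l) else 0)

def IsTransFun {n : ℕ} (p : (Fin n → ℕ) → (Fin n → ℕ) → ℝ → ℝ) : Prop :=
  (∀ i j t, 0 ≤ t → 0 ≤ p i j t) ∧
  (∀ i t, 0 ≤ t → ∀ S : Finset (Fin n → ℕ), ∑ j ∈ S, p i j t ≤ 1) ∧
  (∀ i j, p i j 0 = if i = j then (1:ℝ) else 0)

def SatisfiesForward {n : ℕ} (Q : (Fin n → ℕ) → (Fin n → ℕ) → ℝ)
    (p : (Fin n → ℕ) → (Fin n → ℕ) → ℝ → ℝ) : Prop :=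
  ∀ i j t, 0 ≤ t → HasDerivAt (fun s => p i j s) (∑' k, p i k t * Q k j) t

def IsMinimalQFun {n : ℕ} (Q : (Fin n → ℕ) → (Fin n → ℕ) → ℝ)
    (p : (Fin n → ℕ) → (Fin n → ℕ) → ℝ → ℝ) : Prop :=
  IsTransFun p ∧ SatisfiesForward Q p ∧
  ∀ p', IsTransFun p' → SatisfiesForward Q p' → ∀ i j t, 0 ≤ t → p i j t ≤ p' i j t


lemma hasSum_moment {n : ℕ} (c : (Fin n → ℕ) → ℝ) (M x : Fin n → ℝ)
    (hM : ∀ l, HasSum (fun j : Fin n → ℕ => c j * (j l : ℝ)) (M l)) :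
    HasSum (fun j : Fin n → ℕ => c j * ∑ l, (j l : ℝ) * x l) (∑ l, M l * x l) := by
  have h2 : HasSum (fun j : Fin n → ℕ => ∑ l, c j * (j l : ℝ) * x l) (∑ l, M l * x l) :=
    hasSum_sum fun l _ => (hM l).mul_right (x l)
  simpa [Finset.mul_sum, mul_assoc] using h2

lemma hasSum_zero_total {α : Type*} [DecidableEq α] (g : α → ℝ) (x0 : α)
    (hv : HasSum (fun j : {j : α // j ≠ x0} => g j) (-(g x0))) : HasSum g 0 := by
  let e : {j : α // j ≠ x0} ≃ {j : α // j ∉ ({x0} : Finset α)} :=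
    Equiv.subtypeEquivRight (by simp)
  have hv' : HasSum (fun j : {j : α // j ∉ ({x0} : Finset α)} => g j) (-(g x0)) := by
    refine (Equiv.hasSum_iff e).mp ?_
    have hcomp : ((fun j : {j : α // j ∉ ({x0} : Finset α)} => g j) ∘ ⇑e)
        = fun j : {j : α // j ≠ x0} => g j := by
      funext j
      simp [e, Equiv.subtypeEquivRight]
      rfl
    rw [hcomp]
    exact hv
  have := (Finset.hasSum_compl_iff ({x0} : Finset α)).mp hv'
  simpa using this

/-- Lyapunov drift for exponential ergodicity: if the mean
matrix `B(1,…,1)` has maximal eigenvalue `ρ < 0` with positive eigenvector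
`x`, and the first moments of immigration/resurrection are finite, then with
`f_i = ∑_k i_k x_k`, `C_2 = -ρ`, `C_1 = (∑A_j ∨ ∑H_j)·max_k x_k`, for every
state `i`: `∑_j q_{ij}(f_j - f_i) ≤ C_1 - C_2 f_i`. -/
theorem stmt_10 {n : ℕ} (hn : 0 < n) (h a : (Fin n → ℕ) → ℝ)
    (b : Fin n → (Fin n → ℕ) → ℝ)
    (hhnn : ∀ j : Fin n → ℕ, j ≠ 0 → 0 ≤ h j)
    (hhsum : Summable h)
    (hhval : HasSum (fun j : {j : Fin n → ℕ // j ≠ 0} => h j.1) (-h 0))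
    (hhpos : 0 < -h 0)
    (hann : ∀ j : Fin n → ℕ, j ≠ 0 → 0 ≤ a j)
    (hasum : Summable a)
    (haval : HasSum (fun j : {j : Fin n → ℕ // j ≠ 0} => a j.1) (-a 0))
    (hapos : 0 < -a 0)
    (hbnn : ∀ i j, j ≠ unitvec i → 0 ≤ b i j)
    (hbsum : ∀ i, Summable (b i))
    (hbval : ∀ i, HasSum (fun j : {j : Fin n → ℕ // j ≠ unitvec i} => b i j.1)
      (-(b i (unitvec i))))
    (hbpos : ∀ i, 0 < -(b i (unitvec i)))
    -- first moments: mean matrix `B_{kl}(1,…,1)`, `A_l(1,…,1)`, `H_l(1,…,1)`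
    (Bm : Matrix (Fin n) (Fin n) ℝ)
    (hBm : ∀ k l, HasSum (fun j : Fin n → ℕ => b k j * (j l : ℝ)) (Bm k l))
    (Al Hl : Fin n → ℝ)
    (hAl : ∀ l, HasSum (fun j : Fin n → ℕ => a j * (j l : ℝ)) (Al l))
    (hHl : ∀ l, HasSum (fun j : Fin n → ℕ => h j * (j l : ℝ)) (Hl l))
    -- eigen-structure: `ρ < 0`, positive right eigenvector `x`
    (ρ : ℝ) (hρ : ρ < 0)
    (x : Fin n → ℝ) (hxpos : ∀ k, 0 < x k)
    (heig : ∀ k, ∑ l, Bm k l * x l = ρ * x k)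
    (mx : ℝ) (hmx : IsGreatest (Set.range x) mx)
    (C1 C2 : ℝ)
    (hC1 : C1 = max (∑ l, Al l) (∑ l, Hl l) * mx)
    (hC2 : C2 = -ρ)
    (f : (Fin n → ℕ) → ℝ)
    (hf : ∀ i : Fin n → ℕ, f i = ∑ k, (i k : ℝ) * x k) :
    ∀ i : Fin n → ℕ, ∃ V : ℝ,
      HasSum (fun j : Fin n → ℕ => qmat h a b i j * (f j - f i)) V ∧
      V ≤ C1 - C2 * f i := by

  -- basic facts
  have hmxpos : 0 < mx := by
    obtain ⟨⟨k, hk⟩, -⟩ := hmx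
    exact hk ▸ hxpos k
  have hxle : ∀ l, x l ≤ mx := fun l => hmx.2 ⟨l, rfl⟩
  have hAnn : ∀ l, 0 ≤ Al l := by
    intro l
    refine hasSum_le (f := fun _ => (0:ℝ)) ?_ hasSum_zero (hAl l)
    intro j
    by_cases hj : j = 0
    · simp [hj]
    · exact mul_nonneg (hann j hj) (Nat.cast_nonneg _)
  have hHnn : ∀ l, 0 ≤ Hl l := by
    intro l
    refine hasSum_le (f := fun _ => (0:ℝ)) ?_ hasSum_zero (hHl l)
    intro j
    by_cases hj : j = 0
    · simp [hj]
    · exact mul_nonneg (hhnn j hj) (Nat.cast_nonneg _)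
  have hbound : ∀ M : Fin n → ℝ, (∀ l, 0 ≤ M l) →
      (∑ l, M l) ≤ max (∑ l, Al l) (∑ l, Hl l) → (∑ l, M l * x l) ≤ C1 := by
    intro M hMnn hMle
    have h1 : (∑ l, M l * x l) ≤ ∑ l, M l * mx :=
      Finset.sum_le_sum fun l _ => mul_le_mul_of_nonneg_left (hxle l) (hMnn l)
    have h2 : (∑ l, M l * mx) = (∑ l, M l) * mx := by rw [Finset.sum_mul]
    have h3 : (∑ l, M l) * mx ≤ max (∑ l, Al l) (∑ l, Hl l) * mx :=
      mul_le_mul_of_nonneg_right hMle hmxpos.le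
    rw [hC1]; linarith
  intro i
  by_cases hi0 : i = 0
  · -- resurrection case
    refine ⟨∑ l, Hl l * x l, ?_, ?_⟩
    · have base := hasSum_moment h Hl x hHl
      convert base using 2 with j
      subst hi0
      have hf0 : f 0 = 0 := by simp [hf]
      simp [qmat, hf0, hf j]
    · have hfi : f i = 0 := by subst hi0; simp [hf]
      rw [hfi, mul_zero, sub_zero]
      exact hbound Hl hHnn (le_max_right _ _)
  · -- branching + immigration case
    refine ⟨(∑ k, (i k : ℝ) * (ρ * x k)) + ∑ l, Al l * x l, ?_, ?_⟩
    · -- the A part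
      have hApart : HasSum (fun j : Fin n → ℕ =>
          (if ∀ l, i l ≤ j l then a (fun l => j l - i l) else 0) * (f j - f i))
          (∑ l, Al l * x l) := by
        set g : (Fin n → ℕ) → (Fin n → ℕ) := fun m l => i l + m l with hg
        have hinj : Function.Injective g := by
          intro m m' hmm
          funext l
          have := congrFun hmm l
          simpa [hg] using this
        have hzero : ∀ j ∉ Set.range g,
            (if ∀ l, i l ≤ j l then a (fun l => j l - i l) else 0) * (f j - f i) = 0 := by
          intro j hj
          rw [if_neg, zero_mul]
          intro hcond
          exact hj ⟨fun l => j l - i l, funext fun l => by have := hcond l; simp [hg]; omega⟩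
        refine (Function.Injective.hasSum_iff hinj hzero).mp ?_
        have base : HasSum (fun m : Fin n → ℕ => a m * ∑ l, (m l : ℝ) * x l)
            (∑ l, Al l * x l) := hasSum_moment a Al x hAl
        convert base using 2 with m
        have hc : ∀ l, i l ≤ g m l := fun l => Nat.le_add_right _ _
        simp only [Function.comp, if_pos hc]
        have h1 : (fun l => g m l - i l) = m := funext fun l => by simp [hg]
        rw [h1, hf, hf, ← Finset.sum_sub_distrib]
        congr 1
        refine Finset.sum_congr rfl fun l _ => ?_
        have : ((g m l : ℕ) : ℝ) = (i l : ℝ) + m l := by simp [hg]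
        rw [this]; ring
      -- the B parts
      have hBpart : ∀ k : Fin n, HasSum (fun j : Fin n → ℕ =>
          (if ∀ l, i l ≤ j l + unitvec k l then
            (i k : ℝ) * b k (fun l => j l + unitvec k l - i l) else 0) * (f j - f i))
          ((i k : ℝ) * (ρ * x k)) := by
        intro k
        by_cases hik : i k = 0
        · have hfn : (fun j : Fin n → ℕ =>
              (if ∀ l, i l ≤ j l + unitvec k l then
                (i k : ℝ) * b k (fun l => j l + unitvec k l - i l) else 0) * (f j - f i))
              = fun _ => (0:ℝ) := by
            funext j
            simp [hik]
          rw [hfn, hik]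
          simpa using hasSum_zero
        · have hik1 : 1 ≤ i k := Nat.one_le_iff_ne_zero.mpr hik
          have hule : ∀ l, unitvec k l ≤ i l := by
            intro l
            unfold unitvec
            split
            · next heq => subst heq; omega
            · omega
          set g : (Fin n → ℕ) → (Fin n → ℕ) := fun m l => i l + m l - unitvec k l with hg
          have hinj : Function.Injective g := by
            intro m m' hmm
            funext l
            have h0 := congrFun hmm l
            have h1 := hule l
            simp only [hg] at h0
            omega
          have hzero : ∀ j ∉ Set.range g,
              (if ∀ l, i l ≤ j l + unitvec k l then
                (i k : ℝ) * b k (fun l => j l + unitvec k l - i l) else 0) * (f j - f i) = 0 := by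
            intro j hj
            rw [if_neg, zero_mul]
            intro hcond
            refine hj ⟨fun l => j l + unitvec k l - i l, funext fun l => ?_⟩
            have h1 := hcond l
            have h2 := hule l
            simp only [hg]
            omega
          refine (Function.Injective.hasSum_iff hinj hzero).mp ?_
          have h1 : HasSum (fun m : Fin n → ℕ => b k m * ∑ l, (m l : ℝ) * x l)
              (∑ l, Bm k l * x l) := hasSum_moment (b k) (Bm k) x (hBm k)
          have h0 : HasSum (b k) 0 := hasSum_zero_total (b k) (unitvec k) (hbval k)
          have h2 := (h1.sub (h0.mul_right (x k))).mul_left (i k : ℝ)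
          have hval : (i k : ℝ) * ((∑ l, Bm k l * x l) - 0 * x k) = (i k : ℝ) * (ρ * x k) := by
            rw [heig k]; ring
          rw [hval] at h2
          convert h2 using 1
          case e'_3 => rfl
          funext m
          have hc : ∀ l, i l ≤ g m l + unitvec k l := by
            intro l
            have h3 := hule l
            simp only [hg]
            omega
          simp only [Function.comp, if_pos hc]
          have harg : (fun l => g m l + unitvec k l - i l) = m := by
            funext l
            have h3 := hule l
            simp only [hg]
            omega
          rw [harg]
          have hfg : f (g m) - f i = (∑ l, (m l : ℝ) * x l) - x k := by
            rw [hf, hf, ← Finset.sum_sub_distrib]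
            have hstep : ∀ l ∈ Finset.univ, ((g m l : ℕ) : ℝ) * x l - (i l : ℝ) * x l
                = (m l : ℝ) * x l - ((unitvec k l : ℕ) : ℝ) * x l := by
              intro l _
              have h3 := hule l
              have h4 : ((g m l : ℕ) : ℝ) = (i l : ℝ) + m l - unitvec k l := by
                simp only [hg]
                push_cast [Nat.cast_sub (by omega : unitvec k l ≤ i l + m l)]
                ring
              rw [h4]; ring
            rw [Finset.sum_congr rfl hstep, Finset.sum_sub_distrib]
            congr 1
            have : ∀ l, ((unitvec k l : ℕ) : ℝ) * x l = if l = k then x l else 0 := by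
              intro l
              unfold unitvec
              split <;> simp
            simp only [this]
            simp
          rw [hfg]
          ring
      have hT : HasSum (fun j : Fin n → ℕ => ∑ k, (if ∀ l, i l ≤ j l + unitvec k l then
            (i k : ℝ) * b k (fun l => j l + unitvec k l - i l) else 0) * (f j - f i))
          (∑ k, (i k : ℝ) * (ρ * x k)) := hasSum_sum fun k _ => hBpart k
      have htot := hT.add hApart
      convert htot using 2 with j
      simp only [qmat, if_neg hi0]
      rw [add_mul, Finset.sum_mul]
    · -- the inequality
      have hval : (∑ k, (i k : ℝ) * (ρ * x k)) = ρ * f i := by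
        rw [hf, Finset.mul_sum]
        exact Finset.sum_congr rfl fun k _ => by ring
      rw [hval, hC2]
      have := hbound Al hAnn (le_max_left _ _)
      linarith
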